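/- Let N and H be finitely generated groups with property FW. Then any semidirect product N ⋊ H is finitely generated and has property FW. -/

import Mathlib

open scoped Classical in
/-- The number of ends of a graph: the supremum over finite vertex sets `K` of the
number of infinite connected components of the induced subgraph on the complement of `K`. -/
noncomputable def numEnds {V : Type*} (Γ : SimpleGraph V) : ℕ∞ :=
  ⨆ K : Finset V,
    {C : (SimpleGraph.induce ((↑K : Set V)ᶜ) Γ).ConnectedComponent | C.supp.Infinite}.encard

/-- The orbital graph of an action of `G` on `X` with respect to `S ⊆ G`:
vertices `X`, an edge between `x` and `s • x` for each `s ∈ S`. -/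
def orbitalGraph (G : Type*) [Group G] (S : Set G) (X : Type*) [MulAction G X] :
    SimpleGraph X where
  Adj x y := x ≠ y ∧ ∃ s ∈ S, (s • x = y ∨ s • y = x)
  symm := by
    constructor
    rintro x y ⟨h, s, hs, h'⟩
    exact ⟨h.symm, s, hs, h'.symm⟩
  loopless := by constructor; rintro x ⟨h, -⟩; exact h rfl

/-- The Schreier graph `Sch(G, H; S)`: vertices the left cosets `G ⧸ H`,
an edge between `gH` and `sgH` for each `s ∈ S`. -/
def schreierGraph (G : Type*) [Group G] (S : Set G) (H : Subgroup G) :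
    SimpleGraph (G ⧸ H) where
  Adj x y := x ≠ y ∧ ∃ s ∈ S, ∃ g : G,
      (((g : G ⧸ H) = x ∧ ((s * g : G) : G ⧸ H) = y)) ∨
      (((g : G ⧸ H) = y ∧ ((s * g : G) : G ⧸ H) = x))
  symm := by
    constructor
    rintro x y ⟨h, s, hs, g, hg⟩
    exact ⟨h.symm, s, hs, g, hg.symm⟩
  loopless := by constructor; rintro x ⟨h, -⟩; exact h rfl

/-- The Cayley graph of `G` with respect to `S`. -/
def cayleyGraph (G : Type*) [Group G] (S : Set G) : SimpleGraph G :=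
  orbitalGraph G S G

/-- `S` is a finite symmetric generating set of `G`. -/
def IsSymmGen {G : Type*} [Group G] (S : Finset G) : Prop :=
  (∀ s ∈ S, s⁻¹ ∈ S) ∧ Subgroup.closure (S : Set G) = ⊤

/-- A group has property FW if all of its Schreier graphs with respect to a finite
symmetric generating set have at most one end. -/
def HasFW (G : Type*) [Group G] : Prop :=
  ∀ S : Finset G, IsSymmGen S → ∀ L : Subgroup G, numEnds (schreierGraph G (↑S) L) ≤ 1


open scoped Pointwise
open Set

namespace FWProof

section Graph

variable {Γ : Type*} [Group Γ] {L : Subgroup Γ}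


lemma smul_coe' (g a : Γ) : (g • (↑a : Γ ⧸ L)) = ((g * a : Γ) : Γ ⧸ L) := rfl

lemma schreier_adj (S : Set Γ) (x y : Γ ⧸ L) :
    (schreierGraph Γ S L).Adj x y ↔ x ≠ y ∧ ∃ s ∈ S, s • x = y ∨ s • y = x := by
  constructor
  · rintro ⟨hne, s, hs, g, (⟨h1, h2⟩ | ⟨h1, h2⟩)⟩
    · exact ⟨hne, s, hs, Or.inl (by rw [← h1, smul_coe', h2])⟩
    · exact ⟨hne, s, hs, Or.inr (by rw [← h1, smul_coe', h2])⟩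
  · rintro ⟨hne, s, hs, h⟩
    refine ⟨hne, s, hs, ?_⟩
    rcases h with h | h
    · obtain ⟨a, rfl⟩ := QuotientGroup.mk_surjective x
      exact ⟨a, Or.inl ⟨rfl, by rw [← smul_coe', h]⟩⟩
    · obtain ⟨a, rfl⟩ := QuotientGroup.mk_surjective y
      exact ⟨a, Or.inr ⟨rfl, by rw [← smul_coe', h]⟩⟩

lemma schreier_adj_of_smul {S : Set Γ} {s : Γ} (hs : s ∈ S) {x : Γ ⧸ L}
    (hne : s • x ≠ x) : (schreierGraph Γ S L).Adj x (s • x) :=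
  (schreier_adj S x (s • x)).2 ⟨fun h => hne h.symm, s, hs, Or.inl rfl⟩

lemma schreier_reachable {S : Finset Γ} (hS : IsSymmGen S) (x y : Γ ⧸ L) :
    (schreierGraph Γ (↑S) L).Reachable x y := by
  have key : ∀ g : Γ, ∀ z : Γ ⧸ L, (schreierGraph Γ (↑S) L).Reachable z (g • z) := by
    intro g
    have hg : g ∈ Subgroup.closure (S : Set Γ) := hS.2 ▸ Subgroup.mem_top g
    induction hg using Subgroup.closure_induction with
    | mem s hs =>
      intro z
      by_cases h : s • z = z
      · rw [h]
      · exact (schreier_adj_of_smul hs h).reachable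
    | one => intro z; rw [one_smul]
    | mul a b _ _ ha hb =>
      intro z
      have := (hb z).trans (ha (b • z))
      rwa [smul_smul] at this
    | inv a _ ha =>
      intro z
      have := (ha (a⁻¹ • z)).symm
      rwa [smul_inv_smul] at this
  obtain ⟨a, rfl⟩ := QuotientGroup.mk_surjective x
  obtain ⟨b, rfl⟩ := QuotientGroup.mk_surjective y
  have := key (b * a⁻¹) (↑a)
  rwa [smul_coe', inv_mul_cancel_right] at this

lemma schreier_neighbor_finite (S : Finset Γ) (x : Γ ⧸ L) :
    {y | (schreierGraph Γ (↑S) L).Adj x y}.Finite := by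
  have hsub : {y | (schreierGraph Γ (↑S) L).Adj x y} ⊆
      ⋃ s ∈ (S : Set Γ), {s • x, s⁻¹ • x} := by
    rintro y hy
    rw [Set.mem_setOf_eq, schreier_adj S x y] at hy
    obtain ⟨-, s, hs, h | h⟩ := hy
    · exact Set.mem_biUnion hs (by simp [h])
    · refine Set.mem_biUnion hs (Or.inr ?_)
      simp only [Set.mem_singleton_iff]
      rw [← h, inv_smul_smul]
  exact (S.finite_toSet.biUnion fun s _ => (Set.finite_singleton _).insert _).subset hsub

/-- If a set is almost invariant under generators, it is almost invariant under everything. -/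
lemma comm_of_gen {S : Finset Γ} (hS : IsSymmGen S) {X : Type*} [MulAction Γ X] {M : Set X}
    (h : ∀ s ∈ S, (symmDiff M (s • M)).Finite) (g : Γ) : (symmDiff M (g • M)).Finite := by
  have hg : g ∈ Subgroup.closure (S : Set Γ) := hS.2 ▸ Subgroup.mem_top g
  induction hg using Subgroup.closure_induction with
  | mem s hs => exact h s hs
  | one => simp only [one_smul, symmDiff_self]; exact Set.finite_empty
  | mul a b _ _ ha hb =>
    have h2 : (symmDiff (a • M) ((a * b) • M)).Finite := by
      have : a • (symmDiff M (b • M)) = symmDiff (a • M) ((a * b) • M) := by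
        rw [Set.smul_set_symmDiff, smul_smul]
      exact this ▸ hb.smul_set
    exact (ha.union h2).subset (symmDiff_triangle M (a • M) ((a * b) • M))
  | inv a _ ha =>
    have : a⁻¹ • (symmDiff (a • M) M) = symmDiff M (a⁻¹ • M) := by
      rw [Set.smul_set_symmDiff, inv_smul_smul]
    exact this ▸ (ha.subset (symmDiff_comm (a • M) M ▸ le_refl _)).smul_set

lemma exists_exit {V : Type*} (Y : SimpleGraph V) (Kset : Set V) :
    ∀ {v k : V} (w : Y.Walk v k) (hv : v ∉ Kset) (_ : k ∈ Kset),
      ∃ (z : V) (hz : z ∉ Kset), (∃ k' ∈ Kset, Y.Adj z k') ∧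
        (SimpleGraph.induce Ksetᶜ Y).Reachable ⟨v, hv⟩ ⟨z, hz⟩ := by
  intro v k w
  induction w with
  | nil => intro hv hk; exact absurd hk hv
  | @cons a b c hab w ih =>
    intro hv hk
    by_cases hb : b ∈ Kset
    · exact ⟨a, hv, ⟨b, hb, hab⟩, SimpleGraph.Reachable.refl _⟩
    · obtain ⟨z, hz, hadj, hreach⟩ := ih hb hk
      refine ⟨z, hz, hadj, SimpleGraph.Reachable.trans ?_ hreach⟩
      exact SimpleGraph.Adj.reachable (by exact hab)

lemma ends_ge_two {S : Finset Γ} (hS : IsSymmGen S) {M : Set (Γ ⧸ L)}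
    (hcomm : ∀ g : Γ, (symmDiff M (g • M)).Finite)
    (hM : M.Infinite) (hMc : Mᶜ.Infinite) :
    ¬ numEnds (schreierGraph Γ (↑S) L) ≤ 1 := by
  classical
  intro hle
  set Y := schreierGraph Γ (↑S) L with hY
  set D : Set (Γ ⧸ L) :=
    (⋃ s ∈ (S : Set Γ), symmDiff M (s⁻¹ • M)) ∪ {((1 : Γ) : Γ ⧸ L)} with hD
  have hDfin : D.Finite :=
    (S.finite_toSet.biUnion fun s _ => hcomm s⁻¹).union (Set.finite_singleton _)
  set K : Finset (Γ ⧸ L) := hDfin.toFinset with hK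
  set Kset : Set (Γ ⧸ L) := (↑K : Set (Γ ⧸ L)) with hKset
  have hKD : Kset = D := hDfin.coe_toFinset
  have hk0 : ((1 : Γ) : Γ ⧸ L) ∈ Kset := by
    rw [hKD]; exact Or.inr rfl
  -- crossing adjacent pairs outside D are impossible
  have crossing : ∀ x y : Γ ⧸ L, Y.Adj x y → x ∉ D → y ∉ D → (x ∈ M ↔ y ∈ M) := by
    intro x y hadj hx hy
    rw [hY, schreier_adj] at hadj
    obtain ⟨hne, s, hs, h | h⟩ := hadj
    · constructor
      · intro hxM
        by_contra hyM
        refine hx (Or.inl (Set.mem_biUnion hs ?_))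
        rw [Set.mem_symmDiff]
        exact Or.inl ⟨hxM, fun hmem => hyM (h ▸ (Set.mem_inv_smul_set_iff.mp hmem))⟩
      · intro hyM
        by_contra hxM
        refine hx (Or.inl (Set.mem_biUnion hs ?_))
        rw [Set.mem_symmDiff]
        exact Or.inr ⟨Set.mem_inv_smul_set_iff.mpr (h ▸ hyM), hxM⟩
    · constructor
      · intro hxM
        by_contra hyM
        refine hy (Or.inl (Set.mem_biUnion hs ?_))
        rw [Set.mem_symmDiff]
        exact Or.inr ⟨Set.mem_inv_smul_set_iff.mpr (h ▸ hxM), hyM⟩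
      · intro hyM
        by_contra hxM
        refine hy (Or.inl (Set.mem_biUnion hs ?_))
        rw [Set.mem_symmDiff]
        exact Or.inl ⟨hyM, fun hmem => hxM (h ▸ (Set.mem_inv_smul_set_iff.mp hmem))⟩
  set Y' := SimpleGraph.induce Ksetᶜ Y with hY'
  -- side consistency
  have side : ∀ c d : ↥(Ksetᶜ), Y'.Reachable c d → ((c : Γ ⧸ L) ∈ M ↔ (d : Γ ⧸ L) ∈ M) := by
    intro c d hr
    obtain ⟨w⟩ := hr
    induction w with
    | nil => exact Iff.rfl
    | @cons a b c hab w ih =>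
      refine Iff.trans ?_ ih
      have hadj : Y.Adj (a : Γ ⧸ L) (b : Γ ⧸ L) := hab
      exact crossing _ _ hadj (fun h => a.2 ((Set.ext_iff.mp hKD _).mpr h))
        (fun h => b.2 ((Set.ext_iff.mp hKD _).mpr h))
  -- every component contains a vertex adjacent to Kset
  have hA : {z | z ∉ Kset ∧ ∃ k' ∈ Kset, Y.Adj z k'}.Finite := by
    refine (K.finite_toSet.biUnion fun k _ => schreier_neighbor_finite S k).subset ?_
    rintro z ⟨hz, k', hk', hadj⟩
    exact Set.mem_biUnion hk' hadj.symm
  have compMap : ∀ C : Y'.ConnectedComponent,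
      ∃ z, ∃ hz : z ∈ Ksetᶜ, z ∈ {z | z ∉ Kset ∧ ∃ k' ∈ Kset, Y.Adj z k'} ∧
        Y'.connectedComponentMk ⟨z, hz⟩ = C := by
    intro C
    obtain ⟨c, hc⟩ := C.exists_rep
    obtain ⟨w⟩ := schreier_reachable hS (c : Γ ⧸ L) ((1 : Γ) : Γ ⧸ L)
    obtain ⟨z, hz, hadj, hreach⟩ := exists_exit Y Kset w c.2 hk0
    refine ⟨z, hz, ⟨hz, hadj⟩, ?_⟩
    rw [← hc]
    exact SimpleGraph.ConnectedComponent.sound (hreach.symm.trans (by rw [Subtype.coe_eta]))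
  have hfin : Finite Y'.ConnectedComponent := by
    choose z hz hzA hmk using compMap
    have : Finite ↥{z | z ∉ Kset ∧ ∃ k' ∈ Kset, Y.Adj z k'} := hA.to_subtype
    refine Finite.of_injective
      (fun C => (⟨z C, hzA C⟩ : ↥{z | z ∉ Kset ∧ ∃ k' ∈ Kset, Y.Adj z k'})) ?_
    intro C C' hCC'
    have hval : z C = z C' := congrArg Subtype.val hCC'
    have hsub : (⟨z C, hz C⟩ : ↥(Ksetᶜ)) = ⟨z C', hz C'⟩ := Subtype.ext hval
    rw [← hmk C, ← hmk C', hsub]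
  -- find infinite components on both sides
  have main : ∀ W : Set (Γ ⧸ L), W.Infinite →
      ∃ C : Y'.ConnectedComponent, ((Subtype.val '' C.supp) ∩ W).Infinite := by
    intro W hW
    by_contra hall
    push_neg at hall
    have : W ⊆ Kset ∪ ⋃ C : Y'.ConnectedComponent, (Subtype.val '' C.supp ∩ W) := by
      intro x hx
      by_cases hxK : x ∈ Kset
      · exact Or.inl hxK
      · refine Or.inr (Set.mem_iUnion.mpr ⟨Y'.connectedComponentMk ⟨x, hxK⟩, ?_, hx⟩)
        exact ⟨⟨x, hxK⟩, rfl, rfl⟩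
    exact hW ((K.finite_toSet.union (Set.finite_iUnion hall)).subset this)
  obtain ⟨C₁, hC₁⟩ := main M hM
  obtain ⟨C₂, hC₂⟩ := main Mᶜ hMc
  have hss : ∀ (C : Y'.ConnectedComponent) (c d : ↥(Ksetᶜ)), c ∈ C.supp → d ∈ C.supp →
      ((c : Γ ⧸ L) ∈ M ↔ (d : Γ ⧸ L) ∈ M) := by
    intro C c d hc hd
    rw [SimpleGraph.ConnectedComponent.mem_supp_iff] at hc hd
    exact side c d (SimpleGraph.ConnectedComponent.eq.mp (hc.trans hd.symm))
  have hne : C₁ ≠ C₂ := by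
    intro h
    obtain ⟨a, ⟨ca, hca, rfl⟩, haM⟩ := hC₁.nonempty
    obtain ⟨b, ⟨cb, hcb, rfl⟩, hbM⟩ := hC₂.nonempty
    exact hbM ((hss C₁ ca cb hca (h ▸ hcb)).mp haM)
  have hsupp : ∀ (C : Y'.ConnectedComponent) (W : Set (Γ ⧸ L)),
      ((Subtype.val '' C.supp) ∩ W).Infinite → C.supp.Infinite := by
    intro C W h
    have : (Subtype.val '' C.supp).Infinite := h.mono Set.inter_subset_left
    exact Set.Infinite.of_image _ this
  have htwo : 1 < {C : Y'.ConnectedComponent | C.supp.Infinite}.encard :=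
    Set.one_lt_encard_iff.mpr ⟨C₁, C₂, hsupp C₁ M hC₁, hsupp C₂ Mᶜ hC₂, hne⟩
  have hterm : {C : Y'.ConnectedComponent | C.supp.Infinite}.encard ≤ numEnds Y := by
    rw [numEnds]
    exact le_iSup (fun K : Finset (Γ ⧸ L) =>
      {C : (SimpleGraph.induce ((↑K : Set (Γ ⧸ L))ᶜ) Y).ConnectedComponent |
        C.supp.Infinite}.encard) K
  exact absurd (lt_of_lt_of_le htwo (le_trans hterm hle)) (by norm_num)

lemma exists_comm_of_ends {S : Finset Γ} (hS : IsSymmGen S)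
    (h : ¬ numEnds (schreierGraph Γ (↑S) L) ≤ 1) :
    ∃ M : Set (Γ ⧸ L), (∀ g : Γ, (symmDiff M (g • M)).Finite) ∧ M.Infinite ∧ Mᶜ.Infinite := by
  classical
  set Y := schreierGraph Γ (↑S) L with hY
  rw [numEnds, iSup_le_iff] at h
  push_neg at h
  obtain ⟨K, hK⟩ := h
  set Kset : Set (Γ ⧸ L) := (↑K : Set (Γ ⧸ L)) with hKset
  set Y' := SimpleGraph.induce Ksetᶜ Y with hY'
  obtain ⟨C₁, C₂, hC₁, hC₂, hne⟩ := Set.one_lt_encard_iff.mp hK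
  simp only [Set.mem_setOf_eq] at hC₁ hC₂
  set M : Set (Γ ⧸ L) := Subtype.val '' C₁.supp with hM
  have hMinf : M.Infinite := hC₁.image Subtype.val_injective.injOn
  have hdisj : Subtype.val '' C₂.supp ⊆ Mᶜ := by
    rintro x ⟨c, hc, rfl⟩ ⟨c', hc', hcc'⟩
    have : c' = c := Subtype.ext hcc'
    rw [this] at hc'
    rw [SimpleGraph.ConnectedComponent.mem_supp_iff] at hc hc'
    exact hne (hc'.symm.trans hc)
  have hMcinf : Mᶜ.Infinite := (hC₂.image Subtype.val_injective.injOn).mono hdisj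
  -- M is almost invariant
  have key : ∀ s ∈ S, s • M ⊆ M ∪ Kset := by
    intro s hs x hx
    obtain ⟨x₀, hx₀, rfl⟩ := hx
    obtain ⟨c, hc, rfl⟩ := hx₀
    by_cases hk : s • (c : Γ ⧸ L) ∈ Kset
    · exact Or.inr hk
    · by_cases heq : s • (c : Γ ⧸ L) = (c : Γ ⧸ L)
      · show s • (c : Γ ⧸ L) ∈ M ∪ Kset
        rw [heq]
        exact Or.inl ⟨c, hc, rfl⟩
      · left
        have hadj : Y.Adj (c : Γ ⧸ L) (s • (c : Γ ⧸ L)) :=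
          (schreier_adj (↑S) _ _).mpr ⟨fun hh => heq hh.symm, s, hs, Or.inl rfl⟩
        have hadj' : Y'.Adj c ⟨s • (c : Γ ⧸ L), hk⟩ := hadj
        refine ⟨⟨s • (c : Γ ⧸ L), hk⟩, ?_, rfl⟩
        rw [SimpleGraph.ConnectedComponent.mem_supp_iff] at hc ⊢
        rw [← hc]
        exact (SimpleGraph.ConnectedComponent.sound hadj'.reachable).symm
  have hgen : ∀ s ∈ S, (symmDiff M (s • M)).Finite := by
    intro s hs
    have h1 : s • M \ M ⊆ Kset := fun x hx => (key s hs hx.1).resolve_left hx.2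
    have h2 : M \ s • M ⊆ s • Kset := by
      intro x hx
      have hx' : s⁻¹ • x ∈ s⁻¹ • M := Set.smul_mem_smul_set hx.1
      have := key s⁻¹ (hS.1 s hs) hx'
      rcases this with hmem | hmem
      · exfalso
        apply hx.2
        have : s • s⁻¹ • x ∈ s • M := Set.smul_mem_smul_set hmem
        rwa [smul_inv_smul] at this
      · have : s • s⁻¹ • x ∈ s • Kset := Set.smul_mem_smul_set hmem
        rwa [smul_inv_smul] at this
    rw [symmDiff_def]
    exact ((K.finite_toSet.smul_set.subset h2).union (K.finite_toSet.subset h1)).subset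
      (Set.union_subset_union le_rfl le_rfl)
  exact ⟨M, comm_of_gen hS hgen, hMinf, hMcinf⟩

end Graph

lemma exists_symmGen (G : Type*) [Group G] (h : Group.FG G) : ∃ S : Finset G, IsSymmGen S := by
  classical
  obtain ⟨T, hT⟩ := Group.fg_def.mp h
  refine ⟨T ∪ T.image (·⁻¹), ?_, ?_⟩
  · intro s hs
    rcases Finset.mem_union.mp hs with h' | h'
    · exact Finset.mem_union.mpr (Or.inr (Finset.mem_image.mpr ⟨s, h', rfl⟩))
    · obtain ⟨t, ht, rfl⟩ := Finset.mem_image.mp h'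
      exact Finset.mem_union.mpr (Or.inl (by simpa using ht))
  · rw [eq_top_iff, ← hT]
    refine Subgroup.closure_mono ?_
    intro x hx
    exact Finset.mem_coe.mpr (Finset.mem_union.mpr (Or.inl hx))

/-- convenience: finite inter congruence -/
lemma finite_inter_congr {X : Type*} {A B C : Set X} (h : (symmDiff A B).Finite) :
    (C ∩ A).Finite → (C ∩ B).Finite := by
  intro hCA
  refine (hCA.union h).subset ?_
  intro x hx
  by_cases hxA : x ∈ A
  · exact Or.inl ⟨hx.1, hxA⟩
  · exact Or.inr (Set.mem_symmDiff.mpr (Or.inr ⟨hx.2, hxA⟩))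

variable {N H : Type*} [Group N] [Group H] (φ : H →* MulAut N)

lemma fg_semidirect (hNfg : Group.FG N) (hHfg : Group.FG H) : Group.FG (N ⋊[φ] H) := by
  classical
  obtain ⟨TN, hTN⟩ := Group.fg_def.mp hNfg
  obtain ⟨TH, hTH⟩ := Group.fg_def.mp hHfg
  rw [Group.fg_def]
  refine ⟨TN.image SemidirectProduct.inl ∪ TH.image SemidirectProduct.inr, ?_⟩
  rw [eq_top_iff]
  intro g _
  have hg : g = SemidirectProduct.inl g.left * SemidirectProduct.inr g.right := by
    ext <;> simp
  rw [hg]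
  have h1 : (SemidirectProduct.inl g.left : N ⋊[φ] H) ∈
      Subgroup.closure ((TN.image SemidirectProduct.inl ∪ TH.image SemidirectProduct.inr :
        Finset (N ⋊[φ] H)) : Set (N ⋊[φ] H)) := by
    have : g.left ∈ Subgroup.closure (TN : Set N) := hTN ▸ Subgroup.mem_top _
    have h2 := Subgroup.mem_map_of_mem (SemidirectProduct.inl : N →* N ⋊[φ] H) this
    rw [MonoidHom.map_closure] at h2
    refine Subgroup.closure_mono ?_ h2
    intro x hx
    obtain ⟨t, ht, rfl⟩ := hx
    simp only [Finset.coe_union, Set.mem_union, Finset.coe_image]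
    exact Or.inl ⟨t, ht, rfl⟩
  have h2 : (SemidirectProduct.inr g.right : N ⋊[φ] H) ∈
      Subgroup.closure ((TN.image SemidirectProduct.inl ∪ TH.image SemidirectProduct.inr :
        Finset (N ⋊[φ] H)) : Set (N ⋊[φ] H)) := by
    have : g.right ∈ Subgroup.closure (TH : Set H) := hTH ▸ Subgroup.mem_top _
    have h2 := Subgroup.mem_map_of_mem (SemidirectProduct.inr : H →* N ⋊[φ] H) this
    rw [MonoidHom.map_closure] at h2
    refine Subgroup.closure_mono ?_ h2
    intro x hx
    obtain ⟨t, ht, rfl⟩ := hx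
    simp only [Finset.coe_union, Set.mem_union, Finset.coe_image]
    exact Or.inr ⟨t, ht, rfl⟩
  exact mul_mem h1 h2


open SemidirectProduct in
lemma main_hasFW (hNfg : Group.FG N) (hHfg : Group.FG H) (hN : HasFW N) (hH : HasFW H) :
    HasFW (N ⋊[φ] H) := by
  classical
  intro S hS L
  by_contra hle
  obtain ⟨M, hcomm, hMinf, hMcinf⟩ := exists_comm_of_ends hS hle
  obtain ⟨TN, hTN⟩ := exists_symmGen N hNfg
  obtain ⟨TH, hTH⟩ := exists_symmGen H hHfg
  set L' : Subgroup H := L.map (rightHom : N ⋊[φ] H →* H) with hL'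
  -- the projection map on quotients
  set π : (N ⋊[φ] H) ⧸ L → H ⧸ L' := fun x => Quotient.liftOn' x
    (fun g => (QuotientGroup.mk (rightHom g) : H ⧸ L'))
    (fun a b hab => by
      rw [QuotientGroup.leftRel_apply] at hab
      refine QuotientGroup.eq.mpr ?_
      rw [← map_inv, ← map_mul]
      exact ⟨_, hab, rfl⟩) with hπ
  have hπmk : ∀ g : N ⋊[φ] H, π ↑g = ↑(rightHom g) := fun g => rfl
  have hπsurj : Function.Surjective π := by
    intro y
    obtain ⟨h, rfl⟩ := QuotientGroup.mk_surjective y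
    exact ⟨((inr h : N ⋊[φ] H) : (N ⋊[φ] H) ⧸ L), by rw [hπmk, rightHom_inr]⟩
  have hπequiv : ∀ (g : N ⋊[φ] H) (x : (N ⋊[φ] H) ⧸ L), π (g • x) = rightHom g • π x := by
    intro g x
    obtain ⟨a, rfl⟩ := QuotientGroup.mk_surjective x
    show π ↑(g * a) = rightHom g • ↑(rightHom a)
    rw [hπmk, map_mul]
    rfl
  have hfiber : ∀ x y : (N ⋊[φ] H) ⧸ L, π x = π y ↔ ∃ n : N, (inl n : N ⋊[φ] H) • x = y := by
    intro x y
    constructor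
    · obtain ⟨a, rfl⟩ := QuotientGroup.mk_surjective x
      obtain ⟨b, rfl⟩ := QuotientGroup.mk_surjective y
      intro hxy
      rw [hπmk, hπmk] at hxy
      obtain ⟨l, hl, hl2⟩ := QuotientGroup.eq.mp hxy
      have hker : (b * l⁻¹ * a⁻¹ : N ⋊[φ] H) ∈ (rightHom : N ⋊[φ] H →* H).ker := by
        rw [MonoidHom.mem_ker, map_mul, map_mul, map_inv, map_inv, hl2]
        group
      rw [← range_inl_eq_ker_rightHom] at hker
      obtain ⟨n, hn⟩ := hker
      refine ⟨n, ?_⟩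
      show ((inl n * a : N ⋊[φ] H) : (N ⋊[φ] H) ⧸ L) = ↑b
      rw [hn]
      refine QuotientGroup.eq.mpr ?_
      have : (b * l⁻¹ * a⁻¹ * a)⁻¹ * b = l := by group
      rw [this]
      exact hl
    · rintro ⟨n, rfl⟩
      rw [hπequiv, rightHom_inl, one_smul]
  -- smul on fibers
  have hfib_smul : ∀ (g : N ⋊[φ] H) (y : H ⧸ L'),
      g • (π ⁻¹' {y}) = π ⁻¹' {rightHom g • y} := by
    intro g y
    ext x
    rw [Set.mem_smul_set_iff_inv_smul_mem, Set.mem_preimage, Set.mem_preimage,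
      Set.mem_singleton_iff, Set.mem_singleton_iff, hπequiv, map_inv, inv_smul_eq_iff]
  -- the per-fiber dichotomy, from FW of N
  have dich : ∀ y : H ⧸ L', (π ⁻¹' {y} ∩ M).Finite ∨ (π ⁻¹' {y} ∩ Mᶜ).Finite := by
    intro y
    obtain ⟨x₀, hx₀⟩ := hπsurj y
    set L₀ : Subgroup N := (MulAction.stabilizer (N ⋊[φ] H) x₀).comap
      (inl : N →* N ⋊[φ] H) with hL₀
    set f : N ⧸ L₀ → (N ⋊[φ] H) ⧸ L := fun c => Quotient.liftOn' c (fun n => inl n • x₀)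
      (fun a b hab => by
        rw [QuotientGroup.leftRel_apply] at hab
        have hst : (inl (a⁻¹ * b) : N ⋊[φ] H) • x₀ = x₀ := hab
        have h2 := congrArg (fun z => (inl a : N ⋊[φ] H) • z) hst
        have h3 : (inl b : N ⋊[φ] H) • x₀ = (inl a : N ⋊[φ] H) • x₀ := by
          simpa [smul_smul, ← map_mul, mul_inv_cancel_left] using h2
        exact h3.symm) with hf
    have hfmk : ∀ n : N, f ↑n = (inl n : N ⋊[φ] H) • x₀ := fun n => rfl
    have hfinj : Function.Injective f := by
      intro c d
      obtain ⟨a, rfl⟩ := QuotientGroup.mk_surjective c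
      obtain ⟨b, rfl⟩ := QuotientGroup.mk_surjective d
      intro hcd
      rw [hfmk, hfmk] at hcd
      refine QuotientGroup.eq.mpr ?_
      show (inl (a⁻¹ * b) : N ⋊[φ] H) • x₀ = x₀
      rw [map_mul, map_inv, mul_smul, ← hcd, inv_smul_smul]
    have hfequiv : ∀ (n : N) (c : N ⧸ L₀), f (n • c) = (inl n : N ⋊[φ] H) • f c := by
      intro n c
      obtain ⟨a, rfl⟩ := QuotientGroup.mk_surjective c
      show f ↑(n * a) = (inl n : N ⋊[φ] H) • f ↑a
      rw [hfmk, hfmk, map_mul, mul_smul]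
    have hfrange : Set.range f = π ⁻¹' {y} := by
      ext x
      constructor
      · rintro ⟨c, rfl⟩
        obtain ⟨a, rfl⟩ := QuotientGroup.mk_surjective c
        rw [hfmk]
        show π ((inl a : N ⋊[φ] H) • x₀) ∈ ({y} : Set (H ⧸ L'))
        rw [hπequiv, rightHom_inl, one_smul, hx₀]
        rfl
      · intro hx
        have : π x₀ = π x := by
          rw [hx₀]; exact (Set.mem_singleton_iff.mp hx).symm
        obtain ⟨n, hn⟩ := (hfiber x₀ x).mp this
        exact ⟨↑n, by rw [hfmk, hn]⟩
    set Mt : Set (N ⧸ L₀) := f ⁻¹' M with hMt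
    have hsmul : ∀ n : N, n • Mt = f ⁻¹' ((inl n : N ⋊[φ] H) • M) := by
      intro n
      ext c
      rw [Set.mem_smul_set_iff_inv_smul_mem, hMt, Set.mem_preimage, Set.mem_preimage,
        hfequiv, Set.mem_smul_set_iff_inv_smul_mem, map_inv]
    have hcommt : ∀ n : N, (symmDiff Mt (n • Mt)).Finite := by
      intro n
      have heq : symmDiff Mt (n • Mt) = f ⁻¹' (symmDiff M ((inl n : N ⋊[φ] H) • M)) := by
        rw [hsmul]
        ext c
        simp only [Set.mem_symmDiff, Set.mem_preimage, hMt]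
      rw [heq]
      exact (hcomm (inl n)).preimage hfinj.injOn
    have hnot := ends_ge_two (Γ := N) (L := L₀) hTN hcommt
    have himg : ∀ A : Set ((N ⋊[φ] H) ⧸ L), f '' (f ⁻¹' A) = A ∩ π ⁻¹' {y} := by
      intro A
      rw [Set.image_preimage_eq_inter_range, hfrange]
    by_cases h1 : Mt.Finite
    · left
      have := h1.image f
      rw [himg] at this
      exact this.subset (by rw [Set.inter_comm])
    · by_cases h2 : Mtᶜ.Finite
      · right
        have := h2.image f
        rw [show Mtᶜ = f ⁻¹' Mᶜ from rfl, himg] at this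
        exact this.subset (by rw [Set.inter_comm])
      · exact absurd (hN TN hTN L₀) (hnot (h1 : Mt.Infinite) (h2 : Mtᶜ.Infinite))
  -- the set of crossing points
  set E : Set ((N ⋊[φ] H) ⧸ L) :=
    {x | ∃ t ∈ TN, ¬ (x ∈ M ↔ (inl t : N ⋊[φ] H) • x ∈ M)} with hE
  have hEfin : E.Finite := by
    refine (TN.finite_toSet.biUnion fun t _ =>
      hcomm ((inl t : N ⋊[φ] H))⁻¹).subset ?_
    rintro x ⟨t, ht, hiff⟩
    refine Set.mem_biUnion ht ?_
    rw [Set.mem_symmDiff]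
    by_cases hxM : x ∈ M
    · refine Or.inl ⟨hxM, fun hmem => hiff ⟨fun _ => Set.mem_inv_smul_set_iff.mp hmem,
        fun _ => hxM⟩⟩
    · have htx : (inl t : N ⋊[φ] H) • x ∈ M := by
        by_contra hc
        exact hiff ⟨fun h' => absurd h' hxM, fun h' => absurd h' hc⟩
      exact Or.inr ⟨Set.mem_inv_smul_set_iff.mpr htx, hxM⟩
  have cross : ∀ n : N, ∀ x : (N ⋊[φ] H) ⧸ L,
      ¬ (x ∈ M ↔ (inl n : N ⋊[φ] H) • x ∈ M) → ∃ z ∈ E, π z = π x := by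
    intro n
    have hn : n ∈ Subgroup.closure (TN : Set N) := hTN.2 ▸ Subgroup.mem_top n
    induction hn using Subgroup.closure_induction with
    | mem t ht => exact fun x hx => ⟨x, ⟨t, ht, hx⟩, rfl⟩
    | one => intro x hx; rw [map_one, one_smul] at hx; exact absurd Iff.rfl hx
    | mul a b _ _ ha hb =>
      intro x hx
      by_cases hxb : x ∈ M ↔ (inl b : N ⋊[φ] H) • x ∈ M
      · have h2 : ¬ ((inl b : N ⋊[φ] H) • x ∈ M ↔
            (inl a : N ⋊[φ] H) • ((inl b : N ⋊[φ] H) • x) ∈ M) := by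
          rw [smul_smul, ← map_mul]
          tauto
        obtain ⟨z, hz, hπz⟩ := ha _ h2
        exact ⟨z, hz, by rw [hπz, hπequiv, rightHom_inl, one_smul]⟩
      · exact hb _ hxb
    | inv a _ ha =>
      intro x hx
      have h2 : ¬ ((inl a⁻¹ : N ⋊[φ] H) • x ∈ M ↔
          (inl a : N ⋊[φ] H) • ((inl a⁻¹ : N ⋊[φ] H) • x) ∈ M) := by
        rw [smul_smul, ← map_mul, mul_inv_cancel, map_one, one_smul]
        tauto
      obtain ⟨z, hz, hπz⟩ := ha _ h2
      exact ⟨z, hz, by rw [hπz, hπequiv, rightHom_inl, one_smul]⟩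
  set B : Set (H ⧸ L') := {y | (π ⁻¹' {y} ∩ M).Nonempty ∧ (π ⁻¹' {y} ∩ Mᶜ).Nonempty} with hB
  have hBfin : B.Finite := by
    refine (hEfin.image π).subset ?_
    rintro y ⟨⟨x, hxfib, hxM⟩, ⟨x', hxfib', hxM'⟩⟩
    rw [Set.mem_preimage, Set.mem_singleton_iff] at hxfib hxfib'
    have hππ : π x = π x' := by rw [hxfib, hxfib']
    obtain ⟨n, hn⟩ := (hfiber x x').mp hππ
    have hcr : ¬ (x ∈ M ↔ (inl n : N ⋊[φ] H) • x ∈ M) := by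
      rw [hn]
      exact fun hc => hxM' (hc.mp hxM)
    obtain ⟨z, hz, hπz⟩ := cross n x hcr
    exact ⟨z, hz, hπz.trans hxfib⟩
  have htransH : ∀ y y' : H ⧸ L', ∃ h : H, h • y = y' := by
    intro y y'
    obtain ⟨a, rfl⟩ := QuotientGroup.mk_surjective y
    obtain ⟨b, rfl⟩ := QuotientGroup.mk_surjective y'
    refine ⟨b * a⁻¹, ?_⟩
    show ((b * a⁻¹ * a : H) : H ⧸ L') = ↑b
    rw [inv_mul_cancel_right]
  by_cases hinf : ∃ y : H ⧸ L', (π ⁻¹' {y}).Infinite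
  · obtain ⟨y₀, hy₀⟩ := hinf
    have hall : ∀ y : H ⧸ L', (π ⁻¹' {y}).Infinite := by
      intro y
      obtain ⟨h, hh⟩ := htransH y₀ y
      have := hy₀.smul_set (a := (inr h : N ⋊[φ] H))
      rwa [hfib_smul, rightHom_inr, hh] at this
    set Mb : Set (H ⧸ L') := {y | (π ⁻¹' {y} ∩ Mᶜ).Finite} with hMb
    have hinv : ∀ (h : H) (y : H ⧸ L'), y ∈ Mb → h • y ∈ Mb := by
      intro h y hy
      show (π ⁻¹' {h • y} ∩ Mᶜ).Finite
      have h1 : π ⁻¹' {h • y} = (inr h : N ⋊[φ] H) • π ⁻¹' {y} := by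
        rw [hfib_smul, rightHom_inr]
      have h2 : (π ⁻¹' {y} ∩ ((inr h : N ⋊[φ] H))⁻¹ • Mᶜ).Finite := by
        refine finite_inter_congr ?_ hy
        rw [Set.smul_set_compl, compl_symmDiff_compl]
        exact hcomm ((inr h : N ⋊[φ] H))⁻¹
      have h3 : (inr h : N ⋊[φ] H) • (π ⁻¹' {y} ∩ ((inr h : N ⋊[φ] H))⁻¹ • Mᶜ) =
          π ⁻¹' {h • y} ∩ Mᶜ := by
        rw [Set.smul_set_inter, smul_inv_smul, h1]
      rw [← h3]
      exact h2.smul_set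
    have hcases : Mb = ∅ ∨ Mb = Set.univ := by
      by_cases hne : Mb = ∅
      · exact Or.inl hne
      · right
        obtain ⟨y₀', hy₀'⟩ := Set.nonempty_iff_ne_empty.mpr hne
        ext y
        simp only [Set.mem_univ, iff_true]
        obtain ⟨h, hh⟩ := htransH y₀' y
        exact hh ▸ hinv h y₀' hy₀'
    rcases hcases with hMb0 | hMb0
    · have hfinM : ∀ y, (π ⁻¹' {y} ∩ M).Finite := by
        intro y
        rcases dich y with h | h
        · exact h
        · exact absurd (show y ∈ Mb from h) (by rw [hMb0]; exact Set.notMem_empty y)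
      have hsub : M ⊆ ⋃ y ∈ B, (π ⁻¹' {y} ∩ M) := by
        intro x hx
        refine Set.mem_biUnion ⟨⟨x, rfl, hx⟩, ?_⟩ ⟨rfl, hx⟩
        have hinfc : (π ⁻¹' {π x} ∩ Mᶜ).Infinite := by
          intro hfin
          exact absurd (show π x ∈ Mb from hfin) (by rw [hMb0]; exact Set.notMem_empty _)
        exact hinfc.nonempty
      exact hMinf ((hBfin.biUnion fun y _ => hfinM y).subset hsub)
    · have hsub : Mᶜ ⊆ ⋃ y ∈ B, (π ⁻¹' {y} ∩ Mᶜ) := by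
        intro x hx
        refine Set.mem_biUnion ⟨?_, ⟨x, rfl, hx⟩⟩ ⟨rfl, hx⟩
        by_contra hemp
        rw [Set.not_nonempty_iff_eq_empty] at hemp
        have hfibM : π ⁻¹' {π x} ⊆ Mᶜ := by
          intro z hz
          by_contra hzM
          rw [Set.notMem_compl_iff] at hzM
          exact Set.eq_empty_iff_forall_notMem.mp hemp z ⟨hz, hzM⟩
        have hfin : (π ⁻¹' {π x} ∩ Mᶜ).Finite := show π x ∈ Mb from by
          rw [hMb0]; trivial
        exact hall (π x) (hfin.subset (Set.subset_inter (Set.Subset.refl _) hfibM))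
      have hfinc : ∀ y ∈ B, (π ⁻¹' {y} ∩ Mᶜ).Finite := fun y _ =>
        show y ∈ Mb from by rw [hMb0]; trivial
      exact hMcinf ((hBfin.biUnion hfinc).subset hsub)
  · have hallfin : ∀ y : H ⧸ L', (π ⁻¹' {y}).Finite := by
      intro y
      by_contra hf
      exact hinf ⟨y, hf⟩
    set Mh : Set (H ⧸ L') := {y | (π ⁻¹' {y} ∩ M).Nonempty} with hMh
    have hsmulMh : ∀ h : H, h • Mh =
        {y | (π ⁻¹' {y} ∩ ((inr h : N ⋊[φ] H) • M)).Nonempty} := by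
      intro h
      ext y
      rw [Set.mem_smul_set_iff_inv_smul_mem]
      show (π ⁻¹' {h⁻¹ • y} ∩ M).Nonempty ↔ _
      have h1 : π ⁻¹' {h⁻¹ • y} = ((inr h : N ⋊[φ] H))⁻¹ • π ⁻¹' {y} := by
        rw [hfib_smul, map_inv, rightHom_inr]
      rw [h1]
      calc (((inr h : N ⋊[φ] H))⁻¹ • π ⁻¹' {y} ∩ M).Nonempty
          ↔ ((inr h : N ⋊[φ] H) • (((inr h : N ⋊[φ] H))⁻¹ • π ⁻¹' {y} ∩ M)).Nonempty :=
            Set.smul_set_nonempty.symm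
        _ ↔ (π ⁻¹' {y} ∩ ((inr h : N ⋊[φ] H) • M)).Nonempty := by
            rw [Set.smul_set_inter, smul_inv_smul]
        _ ↔ _ := Iff.rfl
    have hcommMh : ∀ h : H, (symmDiff Mh (h • Mh)).Finite := by
      intro h
      refine ((hcomm (inr h)).image π).subset ?_
      intro y hy
      rw [Set.mem_symmDiff] at hy
      rcases hy with ⟨hy1, hy2⟩ | ⟨hy1, hy2⟩
      · rw [hsmulMh] at hy2
        obtain ⟨x, hx1, hx2⟩ := hy1
        have hnm : x ∉ (inr h : N ⋊[φ] H) • M := fun hc => hy2 ⟨x, hx1, hc⟩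
        exact ⟨x, Set.mem_symmDiff.mpr (Or.inl ⟨hx2, hnm⟩),
          Set.mem_singleton_iff.mp hx1⟩
      · rw [hsmulMh] at hy1
        obtain ⟨x, hx1, hx2⟩ := hy1
        have hnm : x ∉ M := fun hc => hy2 ⟨x, hx1, hc⟩
        exact ⟨x, Set.mem_symmDiff.mpr (Or.inr ⟨hx2, hnm⟩),
          Set.mem_singleton_iff.mp hx1⟩
    by_cases hf1 : Mh.Finite
    · have hsub : M ⊆ ⋃ y ∈ Mh, π ⁻¹' {y} := fun x hx =>
        Set.mem_biUnion ⟨x, rfl, hx⟩ rfl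
      exact hMinf ((hf1.biUnion fun y _ => hallfin y).subset hsub)
    · by_cases hf2 : Mhᶜ.Finite
      · have hsub : Mᶜ ⊆ (⋃ y ∈ Mhᶜ, π ⁻¹' {y}) ∪ ⋃ y ∈ B, π ⁻¹' {y} := by
          intro x hx
          by_cases hxM : π x ∈ Mh
          · exact Or.inr (Set.mem_biUnion ⟨hxM, ⟨x, rfl, hx⟩⟩ rfl)
          · exact Or.inl (Set.mem_biUnion hxM rfl)
        exact hMcinf (((hf2.biUnion fun y _ => hallfin y).union
          (hBfin.biUnion fun y _ => hallfin y)).subset hsub)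
      · exact absurd (hH TH hTH L')
          (ends_ge_two hTH hcommMh (hf1 : Mh.Infinite) (hf2 : Mhᶜ.Infinite))

end FWProof

/-- A semidirect product of finitely generated groups with property FW is finitely
generated and has property FW. -/
theorem stmt15 {N H : Type*} [Group N] [Group H] (φ : H →* MulAut N)
    (hNfg : Group.FG N) (hHfg : Group.FG H) (hN : HasFW N) (hH : HasFW H) :
    Group.FG (N ⋊[φ] H) ∧ HasFW (N ⋊[φ] H) := by
  exact ⟨FWProof.fg_semidirect φ hNfg hHfg, FWProof.main_hasFW φ hNfg hHfg hN hH⟩
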